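/- Law of large numbers for the noiseless design matrix (step in the proof of Lemma 1): for every fixed t₀ ∈ (0,1), ( (I_p ⊗ H^{−1}) [ Σ_{i=1}^n Σ_{l=1}^m (𝐗_l(t_i) ⊗ T_i) K((t_i−t₀)/h) (𝐗_l(t_i) ⊗ T_i)ᵀ ] (I_p ⊗ H^{−1}) ) / (n h f(t₀)) → (Σ_{l=1}^m 𝐗_l(t₀)𝐗_l(t₀)ᵀ) ⊗ S entrywise in probability as n → ∞; equivalently, the sum equals n h f(t₀)[Σ_{l=1}^m 𝐗_l(t₀)𝐗_l(t₀)ᵀ ⊗ HSH](1+o_P(1)). -/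

import Mathlib

open MeasureTheory ProbabilityTheory Matrix Finset Filter

noncomputable section

/-- The `(q+1) × (q+1)` (with `q = 2`) weighted design matrix `T(s)ᵀW(s)T(s)` of local
polynomial regression of order `q = 2` centered at `s`, with kernel `K`, bandwidth `h`,
based on the first `n` of the time points `t`. -/
def TWT (K : ℝ → ℝ) (h : ℝ) (t : ℕ → ℝ) (n : ℕ) (s : ℝ) : Matrix (Fin 3) (Fin 3) ℝ :=
  fun a b => ∑ i ∈ range n, (t i - s) ^ (a : ℕ) * (t i - s) ^ (b : ℕ) * K ((t i - s) / h)

/-- The local polynomial weight function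
`W_ν^{(s)}(x) = e_νᵀ (T(s)ᵀW(s)T(s))⁻¹ (1, hx, …, h^q x^q)ᵀ K(x)` (with `q = 2`).
When `T(s)ᵀW(s)T(s)` is singular, `Matrix.inv` returns the junk value `0`; all
statements below only concern behaviour on the event (of probability tending to one)
that it is invertible. -/
def Wlp (K : ℝ → ℝ) (h : ℝ) (t : ℕ → ℝ) (n : ℕ) (s : ℝ) (ν : Fin 3) (x : ℝ) : ℝ :=
  ((TWT K h t n s)⁻¹.mulVec fun j => h ^ (j : ℕ) * x ^ (j : ℕ)) ν * K x

/-- First-stage local polynomial estimator of the curve (`ν = 0`) or its first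
derivative (`ν = 1`) at the point `s`, from data `Y₁,…,Y_n`:
`Σᵢ W_ν^{(s)}((tᵢ − s)/h) Yᵢ`. -/
def XhatGen (K : ℝ → ℝ) (h : ℝ) (t : ℕ → ℝ) (n : ℕ) (Y : ℕ → ℝ) (s : ℝ) (ν : Fin 3) : ℝ :=
  ∑ i ∈ range n, Wlp K h t n s ν ((t i - s) / h) * Y i

/-- The `(j,k)` entry of the `n × n` matrix `A_r`:
`(A_r)_{jk} = Σᵢ (tᵢ−t₀)^r W₀^{(tᵢ)}((tⱼ−tᵢ)/h) W₁^{(tᵢ)}((tₖ−tᵢ)/h) K((tᵢ−t₀)/h)`. -/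
def Amat (K : ℝ → ℝ) (h : ℝ) (t : ℕ → ℝ) (n : ℕ) (t₀ : ℝ) (r : ℕ) (j k : ℕ) : ℝ :=
  ∑ i ∈ range n, (t i - t₀) ^ r * Wlp K h t n (t i) 0 ((t j - t i) / h) *
    Wlp K h t n (t i) 1 ((t k - t i) / h) * K ((t i - t₀) / h)

/-- The `3 × 3` kernel moment matrix `S`, `S_{ab} = ∫ y^{a+b} K(y) dy` (0-based). -/
def Smat (K : ℝ → ℝ) : Matrix (Fin 3) (Fin 3) ℝ :=
  fun a b => ∫ y : ℝ, y ^ ((a : ℕ) + (b : ℕ)) * K y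

/-- The equivalent kernel `K_ν(x) = e_νᵀ S⁻¹ (1, x, x²)ᵀ K(x)` (with `q = 2`). -/
def Keq (K : ℝ → ℝ) (ν : Fin 3) (x : ℝ) : ℝ :=
  ((Smat K)⁻¹.mulVec fun j => x ^ (j : ℕ)) ν * K x

end

section AuxLLN

open MeasureTheory ProbabilityTheory Filter

private lemma aux_subst_lln (t₀ : ℝ) {c : ℝ} (hc : 0 < c) (Ψ : ℝ → ℝ) :
    (∫ x : ℝ, Ψ ((x - t₀) / c)) = c * ∫ y : ℝ, Ψ y := by
  have h1 : (∫ x : ℝ, Ψ ((x - t₀) / c)) = ∫ x : ℝ, (fun u => Ψ (u / c)) (x - t₀) := rfl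
  rw [h1, integral_sub_right_eq_self (fun u => Ψ (u / c)) t₀,
    MeasureTheory.Measure.integral_comp_div Ψ c, abs_of_pos hc, smul_eq_mul]

end AuxLLN

set_option maxHeartbeats 1000000 in
/-- **Law of large numbers for the noiseless design matrix (step in the proof of
Lemma 1).**  For every fixed `t₀ ∈ (0,1)`, entrywise in probability,
`(I_p ⊗ H⁻¹)[Σᵢ Σₗ (𝐗_l(tᵢ) ⊗ Tᵢ) K((tᵢ−t₀)/h) (𝐗_l(tᵢ) ⊗ Tᵢ)ᵀ](I_p ⊗ H⁻¹) / (n h f(t₀))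
  → (Σₗ 𝐗_l(t₀)𝐗_l(t₀)ᵀ) ⊗ S`.
The `((d,a),(d',b))` entry of the left-hand side is
`Σᵢ Σₗ X_{dl}(tᵢ) X_{d'l}(tᵢ) (tᵢ−t₀)^{a+b} K((tᵢ−t₀)/h) / (n h^{1+a+b} f(t₀))` and the
corresponding entry of the right-hand side is `(Σₗ X_{dl}(t₀)X_{d'l}(t₀)) S_{ab}`. -/

theorem noiseless_design_matrix_lln
    {Ω : Type*} [MeasurableSpace Ω] (μ : Measure Ω) [IsProbabilityMeasure μ]
    (K f : ℝ → ℝ) (h : ℕ → ℝ) (t : ℕ → Ω → ℝ) (t₀ : ℝ)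
    -- the kernel is a continuous, bounded, symmetric probability density on [−1,1]
    (hKcont : Continuous K) (hKbdd : ∃ M, ∀ x, |K x| ≤ M)
    (hKnonneg : ∀ x, 0 ≤ K x) (hKsymm : ∀ x, K (-x) = K x)
    (hKone : (∫ x, K x) = 1) (hKsupp : ∀ x, x ∉ Set.Icc (-1 : ℝ) 1 → K x = 0)
    -- the design density f is C¹ on [0,1], bounded away from zero there
    (hfdiff : ContDiffOn ℝ 1 f (Set.Icc 0 1)) (hfnonneg : ∀ x, 0 ≤ f x)
    (hfsupp : ∀ x, x ∉ Set.Icc (0 : ℝ) 1 → f x = 0)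
    (hfbdd : ∃ c > 0, ∀ x ∈ Set.Icc (0 : ℝ) 1, c ≤ f x)
    (hfone : (∫ x, f x) = 1)
    -- bandwidth: h → 0 and n h³ → ∞
    (hhpos : ∀ n, 0 < h n) (hh0 : Filter.Tendsto h Filter.atTop (nhds 0))
    (hnh : Filter.Tendsto (fun n : ℕ => (n : ℝ) * h n) Filter.atTop Filter.atTop)
    -- the time points are i.i.d. with density f
    (htmeas : ∀ i, Measurable (t i))
    (htindep : iIndepFun t μ)
    (htlaw : ∀ i, Measure.map (t i) μ
      = (volume : Measure ℝ).withDensity fun x => ENNReal.ofReal (f x))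
    (ht₀ : t₀ ∈ Set.Ioo (0 : ℝ) 1)
    -- fixed continuous trajectories
    {p m : ℕ} (hp : 0 < p) (hm : 0 < m) (X : Fin p → Fin m → ℝ → ℝ)
    (hX : ∀ d l, ContinuousOn (X d l) (Set.Icc 0 1)) :
    ∀ a b : Fin p × Fin 3,
      TendstoInMeasure μ
        (fun (n : ℕ) ω =>
          (∑ i ∈ range n, ∑ l : Fin m,
              X a.1 l (t i ω) * X b.1 l (t i ω)
                * (t i ω - t₀) ^ ((a.2 : ℕ) + (b.2 : ℕ)) * K ((t i ω - t₀) / h n))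
          / ((n : ℝ) * h n ^ (1 + (a.2 : ℕ) + (b.2 : ℕ)) * f t₀))
        Filter.atTop
        (fun _ => (∑ l : Fin m, X a.1 l t₀ * X b.1 l t₀) * Smat K a.2 b.2) := by
  intro a b
  set k : ℕ := (a.2 : ℕ) + (b.2 : ℕ) with hk
  obtain ⟨M, hM⟩ := hKbdd
  have hM0 : 0 ≤ M := le_trans (abs_nonneg _) (hM 0)
  have hft₀ : 0 < f t₀ := by
    obtain ⟨c, hc, hcf⟩ := hfbdd
    exact lt_of_lt_of_le hc (hcf t₀ ⟨ht₀.1.le, ht₀.2.le⟩)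
  have ht₀Icc : t₀ ∈ Set.Icc (0:ℝ) 1 := ⟨ht₀.1.le, ht₀.2.le⟩
  -- the projection onto [0,1]
  set pr : ℝ → ℝ := fun s => (Set.projIcc (0:ℝ) 1 zero_le_one s : ℝ) with hprdef
  have hpr_cont : Continuous pr := continuous_subtype_val.comp continuous_projIcc
  have hpr_mem : ∀ s, pr s ∈ Set.Icc (0:ℝ) 1 := fun s => (Set.projIcc 0 1 zero_le_one s).2
  have hpr_id : ∀ s ∈ Set.Icc (0:ℝ) 1, pr s = s := by
    intro s hs
    simp only [hprdef, Set.projIcc_of_mem zero_le_one hs]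
  -- the truncated trajectory product φ
  set φ : ℝ → ℝ := fun s => ∑ l : Fin m, X a.1 l (pr s) * X b.1 l (pr s) with hφdef
  have hφ_cont : Continuous φ := by
    apply continuous_finset_sum
    intro l _
    exact ((hX a.1 l).comp_continuous hpr_cont hpr_mem).mul
      ((hX b.1 l).comp_continuous hpr_cont hpr_mem)
  have hφ_proj : ∀ s, φ s = φ (pr s) := by
    intro s
    simp only [hφdef, hpr_id (pr s) (hpr_mem s)]
  obtain ⟨Bφ, hBφIcc⟩ := isCompact_Icc.exists_bound_of_continuousOn
    (hφ_cont.continuousOn (s := Set.Icc (0:ℝ) 1))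
  have hBφ : ∀ s, |φ s| ≤ Bφ := by
    intro s
    rw [hφ_proj s]
    simpa [Real.norm_eq_abs] using hBφIcc (pr s) (hpr_mem s)
  have hBφ0 : 0 ≤ Bφ := le_trans (abs_nonneg _) (hBφ 0)
  -- measurability and global bound of f
  have hf_cont_Icc : ContinuousOn f (Set.Icc 0 1) := hfdiff.continuousOn
  have hf_meas : Measurable f := by
    have hfeq : f = fun x => f (pr x) * (Set.Icc (0:ℝ) 1).indicator (fun _ => (1:ℝ)) x := by
      funext x
      by_cases hx : x ∈ Set.Icc (0:ℝ) 1
      · simp [hpr_id x hx, Set.indicator_of_mem hx]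
      · simp [Set.indicator_of_notMem hx, hfsupp x hx]
    rw [hfeq]
    exact ((hf_cont_Icc.comp_continuous hpr_cont hpr_mem).measurable).mul
      (measurable_const.indicator measurableSet_Icc)
  obtain ⟨Bf, hBfIcc⟩ := isCompact_Icc.exists_bound_of_continuousOn hf_cont_Icc
  have hBf0 : 0 ≤ Bf := le_trans (norm_nonneg _) (hBfIcc 0 (by norm_num))
  have hBf : ∀ x, f x ≤ Bf := by
    intro x
    by_cases hx : x ∈ Set.Icc (0:ℝ) 1
    · exact le_trans (le_abs_self _) (by simpa [Real.norm_eq_abs] using hBfIcc x hx)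
    · simp [hfsupp x hx, hBf0]
  -- the normalized integrand g
  set g : ℕ → ℝ → ℝ :=
    fun n s => φ s * (((s - t₀) / h n) ^ k * K ((s - t₀) / h n)) / (h n * f t₀) with hgdef
  have hg_meas : ∀ n, Measurable (g n) := by
    intro n
    apply Measurable.div_const
    exact hφ_cont.measurable.mul
      ((((measurable_id.sub_const t₀).div_const (h n)).pow_const k).mul
        (hKcont.measurable.comp ((measurable_id.sub_const t₀).div_const (h n))))
  have hyK : ∀ y : ℝ, |y ^ k * K y| ≤ M := by
    intro y
    by_cases hy : y ∈ Set.Icc (-1:ℝ) 1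
    · have h1 : |y| ≤ 1 := abs_le.2 ⟨hy.1, hy.2⟩
      calc |y ^ k * K y| = |y| ^ k * |K y| := by rw [abs_mul, abs_pow]
        _ ≤ 1 * M :=
          mul_le_mul (pow_le_one₀ (abs_nonneg _) h1) (hM y) (abs_nonneg _) zero_le_one
        _ = M := one_mul M
    · simp [hKsupp y hy, hM0]
  set C₁ : ℝ := Bφ * M / f t₀ with hC₁def
  have hC₁0 : 0 ≤ C₁ := by positivity
  have hg_bdd : ∀ n s, |g n s| ≤ C₁ / h n := by
    intro n s
    have hpos : 0 < h n * f t₀ := mul_pos (hhpos n) hft₀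
    simp only [hgdef]
    rw [abs_div, abs_of_pos hpos]
    have h1 : |φ s * (((s - t₀) / h n) ^ k * K ((s - t₀) / h n))| ≤ Bφ * M := by
      rw [abs_mul]
      exact mul_le_mul (hBφ s) (hyK _) (abs_nonneg _) hBφ0
    calc |φ s * (((s - t₀) / h n) ^ k * K ((s - t₀) / h n))| / (h n * f t₀)
        ≤ (Bφ * M) / (h n * f t₀) := by gcongr
      _ = C₁ / h n := by rw [hC₁def, div_div, mul_comm (f t₀) (h n), ← div_div]
  have hW_meas : ∀ n i, Measurable fun ω => g n (t i ω) := fun n i => (hg_meas n).comp (htmeas i)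
  have hW_mem : ∀ n i, MemLp (fun ω => g n (t i ω)) 2 μ := by
    intro n i
    exact MemLp.of_bound (hW_meas n i).aestronglyMeasurable (C₁ / h n)
      (Filter.Eventually.of_forall fun ω => by
        simpa [Real.norm_eq_abs] using hg_bdd n (t i ω))
  -- the law of t i
  have hlaw : ∀ (i : ℕ) (G : ℝ → ℝ), Measurable G →
      (∫ ω, G (t i ω) ∂μ) = ∫ x, f x * G x := by
    intro i G hG
    have h1 : (∫ ω, G (t i ω) ∂μ) = ∫ x, G x ∂(Measure.map (t i) μ) :=
      (integral_map (htmeas i).aemeasurable hG.aestronglyMeasurable).symm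
    rw [h1, htlaw i]
    have h2 : ((volume : Measure ℝ).withDensity fun x => ENNReal.ofReal (f x))
        = (volume : Measure ℝ).withDensity fun x => ((Real.toNNReal (f x) : NNReal) : ENNReal) :=
      rfl
    rw [h2, integral_withDensity_eq_integral_smul hf_meas.real_toNNReal]
    congr 1
    funext x
    simp [NNReal.smul_def, Real.coe_toNNReal _ (hfnonneg x)]
  -- the rescaled integrand Ψ
  set Ψ : ℕ → ℝ → ℝ :=
    fun n y => φ (t₀ + h n * y) * (y ^ k * K y) * f (t₀ + h n * y) / f t₀ with hΨdef
  have hΨ_meas : ∀ n, Measurable (Ψ n) := by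
    intro n
    apply Measurable.div_const
    exact ((hφ_cont.measurable.comp (measurable_const.add (measurable_id.const_mul (h n)))).mul
      ((measurable_id.pow_const k).mul hKcont.measurable)).mul
      (hf_meas.comp (measurable_const.add (measurable_id.const_mul (h n))))
  have hfg : ∀ n x, f x * g n x = (1 / h n) * Ψ n ((x - t₀) / h n) := by
    intro n x
    have hhne : h n ≠ 0 := (hhpos n).ne'
    have hx : t₀ + h n * ((x - t₀) / h n) = x := by field_simp; ring
    simp only [hΨdef, hgdef, hx]
    field_simp
  -- the mean of each summand
  have hmean : ∀ n i, (∫ ω, g n (t i ω) ∂μ) = ∫ y, Ψ n y := by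
    intro n i
    rw [hlaw i (g n) (hg_meas n)]
    have h1 : (fun x => f x * g n x) = fun x => (1 / h n) * Ψ n ((x - t₀) / h n) :=
      funext (hfg n)
    rw [h1, integral_const_mul, aux_subst_lln t₀ (hhpos n) (Ψ n), one_div,
      inv_mul_cancel_left₀ (hhpos n).ne']
  -- the dominating function
  set bound : ℝ → ℝ := fun y => Bφ * Bf / f t₀ * K y with hbounddef
  have hΨ_le : ∀ n y, |Ψ n y| ≤ bound y := by
    intro n y
    by_cases hy : y ∈ Set.Icc (-1:ℝ) 1
    · have h1 : |y| ≤ 1 := abs_le.2 ⟨hy.1, hy.2⟩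
      simp only [hΨdef, hbounddef]
      rw [abs_div, abs_of_pos hft₀]
      rw [abs_mul, abs_mul, abs_mul, abs_pow, abs_of_nonneg (hKnonneg y),
        abs_of_nonneg (hfnonneg (t₀ + h n * y))]
      have e1 : |φ (t₀ + h n * y)| * (|y| ^ k * K y) ≤ Bφ * K y := by
        have e0 : |y| ^ k * K y ≤ 1 * K y :=
          mul_le_mul_of_nonneg_right (pow_le_one₀ (abs_nonneg _) h1) (hKnonneg y)
        calc |φ (t₀ + h n * y)| * (|y| ^ k * K y) ≤ Bφ * (1 * K y) :=
              mul_le_mul (hBφ _) e0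
                (mul_nonneg (pow_nonneg (abs_nonneg _) _) (hKnonneg y)) hBφ0
          _ = Bφ * K y := by ring
      have e2 : |φ (t₀ + h n * y)| * (|y| ^ k * K y) * f (t₀ + h n * y) ≤ Bφ * Bf * K y := by
        calc |φ (t₀ + h n * y)| * (|y| ^ k * K y) * f (t₀ + h n * y) ≤ (Bφ * K y) * Bf :=
              mul_le_mul e1 (hBf _) (hfnonneg _) (mul_nonneg hBφ0 (hKnonneg y))
          _ = Bφ * Bf * K y := by ring
      calc |φ (t₀ + h n * y)| * (|y| ^ k * K y) * f (t₀ + h n * y) / f t₀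
          ≤ (Bφ * Bf * K y) / f t₀ := by gcongr
        _ = Bφ * Bf / f t₀ * K y := by ring
    · simp [hΨdef, hbounddef, hKsupp y hy]
  -- integrability facts
  have hK_int : Integrable K :=
    hKcont.integrable_of_hasCompactSupport (HasCompactSupport.intro isCompact_Icc hKsupp)
  have hbound_int : Integrable bound := hK_int.const_mul _
  have hΨ_int : ∀ n, Integrable (Ψ n) := fun n =>
    Integrable.mono' hbound_int (hΨ_meas n).aestronglyMeasurable
      (Filter.Eventually.of_forall fun y => by simpa [Real.norm_eq_abs] using hΨ_le n y)
  -- convergence of the means by dominated convergence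
  have hmean_tendsto :
      Tendsto (fun n => ∫ y, Ψ n y) atTop (nhds (∫ y, φ t₀ * (y ^ k * K y))) := by
    apply tendsto_integral_filter_of_dominated_convergence bound
    · exact Filter.Eventually.of_forall fun n => (hΨ_meas n).aestronglyMeasurable
    · exact Filter.Eventually.of_forall fun n =>
        Filter.Eventually.of_forall fun y => by simpa [Real.norm_eq_abs] using hΨ_le n y
    · exact hbound_int
    · apply Filter.Eventually.of_forall
      intro y
      have hu : Tendsto (fun n => t₀ + h n * y) atTop (nhds t₀) := by
        have h1 : Tendsto (fun n => h n * y) atTop (nhds 0) := by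
          simpa using hh0.mul_const y
        simpa using tendsto_const_nhds.add h1
      have hφt : Tendsto (fun n => φ (t₀ + h n * y)) atTop (nhds (φ t₀)) :=
        (hφ_cont.tendsto t₀).comp hu
      have hfc : ContinuousAt f t₀ :=
        hf_cont_Icc.continuousAt (Icc_mem_nhds ht₀.1 ht₀.2)
      have hft : Tendsto (fun n => f (t₀ + h n * y)) atTop (nhds (f t₀)) :=
        hfc.tendsto.comp hu
      have h2 := ((hφt.mul (tendsto_const_nhds :
        Tendsto (fun _ : ℕ => y ^ k * K y) atTop (nhds (y ^ k * K y)))).mul hft).div_const (f t₀)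
      have h3 : φ t₀ * (y ^ k * K y) = φ t₀ * (y ^ k * K y) * f t₀ / f t₀ := by
        field_simp
      simp only [hΨdef]
      rw [h3]
      exact h2
  -- identify the limit
  have hφt₀ : φ t₀ = ∑ l : Fin m, X a.1 l t₀ * X b.1 l t₀ := by
    simp only [hφdef, hpr_id t₀ ht₀Icc]
  set L : ℝ := (∑ l : Fin m, X a.1 l t₀ * X b.1 l t₀) * Smat K a.2 b.2 with hLdef
  have hIL : (∫ y, φ t₀ * (y ^ k * K y)) = L := by
    rw [integral_const_mul, hφt₀, hLdef]
    congr 1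
  have hEtendsto : Tendsto (fun n => ∫ y, Ψ n y) atTop (nhds L) := hIL ▸ hmean_tendsto
  -- second moment bound
  set D : ℝ := Bφ * Bf / f t₀ with hDdef
  have hD0 : 0 ≤ D := by positivity
  have hDint : (∫ y, bound y) = D := by
    simp only [hbounddef]
    rw [integral_const_mul, hKone, mul_one, hDdef]
  have habsΨ : ∀ n, (∫ y, |Ψ n y|) ≤ D := by
    intro n
    refine le_trans (integral_mono (hΨ_int n).abs hbound_int fun y => hΨ_le n y) (le_of_eq hDint)
  have hEabs : ∀ n i, (∫ ω, |g n (t i ω)| ∂μ) ≤ D := by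
    intro n i
    have h1 : (∫ ω, |g n (t i ω)| ∂μ) = ∫ x, f x * |g n x| :=
      hlaw i (fun x => |g n x|) (hg_meas n).abs
    have h2 : (fun x => f x * |g n x|) = fun x => (1 / h n) * |Ψ n ((x - t₀) / h n)| := by
      funext x
      have h3 : |f x * g n x| = |(1 / h n) * Ψ n ((x - t₀) / h n)| := by rw [hfg n x]
      rw [abs_mul, abs_of_nonneg (hfnonneg x), abs_mul,
        abs_of_pos (one_div_pos.mpr (hhpos n))] at h3
      exact h3
    rw [h1, h2, integral_const_mul, aux_subst_lln t₀ (hhpos n) (fun y => |Ψ n y|)]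
    have hhne : h n ≠ 0 := (hhpos n).ne'
    calc 1 / h n * (h n * ∫ y, |Ψ n y|) = ∫ y, |Ψ n y| := by
          rw [one_div, inv_mul_cancel_left₀ hhne]
      _ ≤ D := habsΨ n
  have hVarW : ∀ n i, variance (fun ω => g n (t i ω)) μ ≤ C₁ * D / h n := by
    intro n i
    refine le_trans (variance_le_expectation_sq (hW_meas n i).aestronglyMeasurable) ?_
    have h1 : (∫ ω, ((fun ω => g n (t i ω)) ^ 2) ω ∂μ)
        ≤ ∫ ω, (C₁ / h n) * |g n (t i ω)| ∂μ := by
      apply integral_mono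
      · exact (hW_mem n i).integrable_sq
      · exact (((hW_mem n i).integrable one_le_two).abs).const_mul _
      · intro ω
        simp only [Pi.pow_apply]
        have h2 := hg_bdd n (t i ω)
        calc g n (t i ω) ^ 2 = |g n (t i ω)| * |g n (t i ω)| := by
              rw [abs_mul_abs_self]; ring
          _ ≤ (C₁ / h n) * |g n (t i ω)| :=
              mul_le_mul_of_nonneg_right h2 (abs_nonneg _)
    refine le_trans h1 ?_
    rw [integral_const_mul]
    calc (C₁ / h n) * ∫ ω, |g n (t i ω)| ∂μ ≤ (C₁ / h n) * D :=
          mul_le_mul_of_nonneg_left (hEabs n i) (div_nonneg hC₁0 (hhpos n).le)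
      _ = C₁ * D / h n := by ring
  -- variance of the sum
  set S : ℕ → Ω → ℝ := fun n ω => ∑ i ∈ range n, g n (t i ω) with hSdef
  have hS_mem : ∀ n, MemLp (S n) 2 μ := by
    intro n
    have h1 : S n = ∑ i ∈ range n, fun ω => g n (t i ω) := by
      funext ω; simp [hSdef]
    rw [h1]
    exact memLp_finset_sum' _ fun i _ => hW_mem n i
  have hS_int : ∀ n, (∫ ω, S n ω ∂μ) = (n : ℝ) * ∫ y, Ψ n y := by
    intro n
    simp only [hSdef]
    rw [integral_finset_sum _ fun i _ => (hW_mem n i).integrable one_le_two]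
    rw [Finset.sum_congr rfl fun i _ => hmean n i]
    simp [Finset.sum_const, Finset.card_range]
  have hS_var : ∀ n, variance (S n) μ ≤ (n : ℝ) * (C₁ * D / h n) := by
    intro n
    have h1 : S n = ∑ i ∈ range n, fun ω => g n (t i ω) := by
      funext ω; simp [hSdef]
    have hindep : iIndepFun (fun i => fun ω => g n (t i ω)) μ :=
      htindep.comp (fun _ => g n) (fun _ => hg_meas n)
    rw [h1, IndepFun.variance_sum (fun i _ => hW_mem n i)
      (fun i _ j _ hij => hindep.indepFun hij)]
    calc (∑ i ∈ range n, variance (fun ω => g n (t i ω)) μ)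
        ≤ ∑ _i ∈ range n, C₁ * D / h n := Finset.sum_le_sum fun i _ => hVarW n i
      _ = (n : ℝ) * (C₁ * D / h n) := by simp [Finset.sum_const, Finset.card_range]
  -- convergence in measure of the truncated averages
  have hZ' : TendstoInMeasure μ (fun (n : ℕ) ω => ((n : ℝ))⁻¹ * S n ω) atTop (fun _ => L) := by
    rw [tendstoInMeasure_iff_dist]
    intro ε hε
    have hbnd : ∀ᶠ n : ℕ in atTop,
        μ {ω | ε ≤ dist (((n : ℝ))⁻¹ * S n ω) L}
          ≤ ENNReal.ofReal ((C₁ * D * 4 / ε ^ 2) * ((n : ℝ) * h n)⁻¹) := by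
      have h1 : ∀ᶠ n in atTop, |(∫ y, Ψ n y) - L| < ε / 2 := by
        have h2 := Metric.tendsto_nhds.mp hEtendsto (ε / 2) (by positivity)
        filter_upwards [h2] with n hn
        rwa [Real.dist_eq] at hn
      filter_upwards [h1, eventually_ge_atTop 1] with n hn1 hn2
      have hnpos : (0:ℝ) < n := by exact_mod_cast hn2
      have hnne : (n:ℝ) ≠ 0 := hnpos.ne'
      have hhne : h n ≠ 0 := (hhpos n).ne'
      have hZmean : (∫ ω, ((n : ℝ))⁻¹ * S n ω ∂μ) = ∫ y, Ψ n y := by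
        rw [integral_const_mul, hS_int n]
        field_simp
      have hZmem : MemLp (fun ω => ((n : ℝ))⁻¹ * S n ω) 2 μ := (hS_mem n).const_mul _
      have hZvar : variance (fun ω => ((n : ℝ))⁻¹ * S n ω) μ ≤ C₁ * D / ((n : ℝ) * h n) := by
        rw [variance_const_mul]
        calc ((n : ℝ))⁻¹ ^ 2 * variance (S n) μ
            ≤ ((n : ℝ))⁻¹ ^ 2 * ((n : ℝ) * (C₁ * D / h n)) :=
              mul_le_mul_of_nonneg_left (hS_var n) (by positivity)
          _ = C₁ * D / ((n : ℝ) * h n) := by field_simp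
      have hsub : {ω | ε ≤ dist (((n : ℝ))⁻¹ * S n ω) L}
          ⊆ {ω | ε / 2 ≤ |((n : ℝ))⁻¹ * S n ω - ∫ x, ((n : ℝ))⁻¹ * S n x ∂μ|} := by
        intro ω hω
        simp only [Set.mem_setOf_eq, Real.dist_eq] at hω ⊢
        rw [hZmean]
        have htri : |((n : ℝ))⁻¹ * S n ω - L|
            ≤ |((n : ℝ))⁻¹ * S n ω - ∫ y, Ψ n y| + |(∫ y, Ψ n y) - L| :=
          abs_sub_le _ _ _
        linarith
      refine le_trans (measure_mono hsub) ?_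
      refine le_trans (meas_ge_le_variance_div_sq hZmem (by positivity : (0:ℝ) < ε / 2)) ?_
      apply ENNReal.ofReal_le_ofReal
      calc variance (fun ω => ((n : ℝ))⁻¹ * S n ω) μ / (ε / 2) ^ 2
          ≤ (C₁ * D / ((n : ℝ) * h n)) / (ε / 2) ^ 2 := by gcongr
        _ = (C₁ * D * 4 / ε ^ 2) * ((n : ℝ) * h n)⁻¹ := by
            field_simp
            ring
    have hlim : Tendsto (fun n : ℕ => ENNReal.ofReal ((C₁ * D * 4 / ε ^ 2) * ((n : ℝ) * h n)⁻¹))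
        atTop (nhds 0) := by
      have h1 : Tendsto (fun n : ℕ => (C₁ * D * 4 / ε ^ 2) * ((n : ℝ) * h n)⁻¹)
          atTop (nhds 0) := by
        have h2 : Tendsto (fun n : ℕ => ((n : ℝ) * h n)⁻¹) atTop (nhds 0) :=
          hnh.inv_tendsto_atTop
        simpa using h2.const_mul (C₁ * D * 4 / ε ^ 2)
      simpa using ENNReal.tendsto_ofReal h1
    exact tendsto_of_tendsto_of_tendsto_of_le_of_le' tendsto_const_nhds hlim
      (Filter.Eventually.of_forall fun n => zero_le') hbnd
  -- transfer to the original expression via a.e. equality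
  have hnull : ∀ i, μ {ω | t i ω ∉ Set.Icc (0:ℝ) 1} = 0 := by
    intro i
    have h1 : {ω | t i ω ∉ Set.Icc (0:ℝ) 1} = t i ⁻¹' (Set.Icc (0:ℝ) 1)ᶜ := rfl
    have h4 : ∀ᵐ x ∂(volume : Measure ℝ),
        x ∈ (Set.Icc (0:ℝ) 1)ᶜ → ENNReal.ofReal (f x) = 0 :=
      Filter.Eventually.of_forall fun x hx => by simp [hfsupp x hx]
    rw [h1, ← Measure.map_apply (htmeas i) measurableSet_Icc.compl, htlaw i,
      withDensity_apply _ measurableSet_Icc.compl,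
      setLIntegral_congr_fun_ae measurableSet_Icc.compl h4]
    simp
  refine TendstoInMeasure.congr (f := fun (n : ℕ) ω => ((n : ℝ))⁻¹ * S n ω) ?_ Filter.EventuallyEq.rfl hZ'
  intro n
  have hae : ∀ᵐ ω ∂μ, ∀ i : ℕ, i ∈ range n → t i ω ∈ Set.Icc (0:ℝ) 1 := by
    rw [ae_all_iff]
    intro i
    have hi : ∀ᵐ ω ∂μ, t i ω ∈ Set.Icc (0:ℝ) 1 := ae_iff.mpr (hnull i)
    filter_upwards [hi] with ω hω
    exact fun _ => hω
  filter_upwards [hae] with ω hω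
  have hhne : h n ≠ 0 := (hhpos n).ne'
  have hfne : f t₀ ≠ 0 := hft₀.ne'
  have hterm : ∀ i ∈ range n,
      g n (t i ω) = (∑ l : Fin m, X a.1 l (t i ω) * X b.1 l (t i ω)
          * (t i ω - t₀) ^ k * K ((t i ω - t₀) / h n))
        / (h n ^ (1 + (a.2 : ℕ) + (b.2 : ℕ)) * f t₀) := by
    intro i hi
    have hXi : φ (t i ω) = ∑ l : Fin m, X a.1 l (t i ω) * X b.1 l (t i ω) := by
      simp only [hφdef, hpr_id (t i ω) (hω i hi)]
    have hsum : (∑ l : Fin m, X a.1 l (t i ω) * X b.1 l (t i ω)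
          * (t i ω - t₀) ^ k * K ((t i ω - t₀) / h n))
        = (∑ l : Fin m, X a.1 l (t i ω) * X b.1 l (t i ω))
          * ((t i ω - t₀) ^ k * K ((t i ω - t₀) / h n)) := by
      rw [Finset.sum_mul]
      apply Finset.sum_congr rfl
      intro l _
      ring
    have he : 1 + (a.2 : ℕ) + (b.2 : ℕ) = 1 + k := by rw [hk]; ring
    simp only [hgdef, hsum, he, ← hXi]
    rw [div_pow]
    have hpow : h n ^ (1 + k) = h n ^ k * h n := by
      rw [pow_add, pow_one, mul_comm]
    rw [hpow]
    simp only [div_eq_mul_inv, mul_inv]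
    ring
  have hSa : S n ω = ∑ i ∈ range n, g n (t i ω) := rfl
  rw [hSa, Finset.sum_congr rfl hterm, ← Finset.sum_div]
  rw [div_eq_mul_inv, div_eq_mul_inv, mul_inv, mul_inv]
  ring
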